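/- Let R be a unital associative ℝ-algebra, let α, β, γ, δ, u, v ∈ ℝ, and let s, t, e, ẽ ∈ R satisfy: s·e = α•(e·s) + β•(ẽ·s) + u•s; s·ẽ = γ•(e·s) + δ•(ẽ·s) + v•s; e·t = α•(t·e) + β•(t·ẽ) + u•t; ẽ·t = γ•(t·e) + δ•(t·ẽ) + v•t; and e·ẽ = ẽ·e. Define 𝕃 : R × R → R × R by 𝕃(x, y) = (α•x + β•y + u•1, γ•x + δ•y + v•1). Then for all natural numbers n, i, j, writing (Xₙ, Yₙ) = 𝕃^[n](e, ẽ), one has sⁿ · eⁱ · ẽʲ = Xₙⁱ · Yₙʲ · sⁿ and eⁱ · ẽʲ · tⁿ = tⁿ · Xₙⁱ · Yₙʲ. -/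
import Mathlib


/-- reordering formula in the algebra 𝒜_L for monomials `p(x,y) = xⁱ yʲ`:
`sⁿ eⁱ e'ʲ = Xₙⁱ Yₙʲ sⁿ` and `eⁱ e'ʲ tⁿ = tⁿ Xₙⁱ Yₙʲ` where `(Xₙ, Yₙ) = 𝕃^[n](e, e')`.
Here `e'` denotes ẽ. -/
theorem stmt_2 (R : Type*) [Ring R] [Algebra ℝ R]
    (α β γ δ u v : ℝ) (s t e e' : R)
    (h1 : s * e = α • (e * s) + β • (e' * s) + u • s)
    (h2 : s * e' = γ • (e * s) + δ • (e' * s) + v • s)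
    (h3 : e * t = α • (t * e) + β • (t * e') + u • t)
    (h4 : e' * t = γ • (t * e) + δ • (t * e') + v • t)
    (h5 : e * e' = e' * e)
    (L : R × R → R × R)
    (hL : L = fun p => (α • p.1 + β • p.2 + u • (1 : R), γ • p.1 + δ • p.2 + v • (1 : R))) :
    ∀ n i j : ℕ,
      s ^ n * e ^ i * e' ^ j = (L^[n] (e, e')).1 ^ i * (L^[n] (e, e')).2 ^ j * s ^ n ∧
      e ^ i * e' ^ j * t ^ n = t ^ n * ((L^[n] (e, e')).1 ^ i * (L^[n] (e, e')).2 ^ j) := by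
  -- one-step relations for s
  have key : ∀ n : ℕ,
      s * (L^[n] (e, e')).1 = (L^[n+1] (e, e')).1 * s ∧
      s * (L^[n] (e, e')).2 = (L^[n+1] (e, e')).2 * s := by
    intro n
    induction n with
    | zero =>
      simp only [Function.iterate_zero, Function.iterate_one, id_eq, hL]
      refine ⟨by rw [h1]; simp [add_mul, smul_mul_assoc],
        by rw [h2]; simp [add_mul, smul_mul_assoc]⟩
    | succ n ih =>
      rw [Function.iterate_succ_apply' L n, Function.iterate_succ_apply' L (n+1)]
      simp only [hL] at ih ⊢
      refine ⟨?_, ?_⟩ <;>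
        simp only [mul_add, add_mul, mul_smul_comm, smul_mul_assoc, mul_one, one_mul,
          ih.1, ih.2]
  -- one-step relations for t
  have keyt : ∀ n : ℕ,
      (L^[n] (e, e')).1 * t = t * (L^[n+1] (e, e')).1 ∧
      (L^[n] (e, e')).2 * t = t * (L^[n+1] (e, e')).2 := by
    intro n
    induction n with
    | zero =>
      simp only [Function.iterate_zero, Function.iterate_one, id_eq, hL]
      refine ⟨by rw [h3]; simp [mul_add, mul_smul_comm],
        by rw [h4]; simp [mul_add, mul_smul_comm]⟩
    | succ n ih =>
      rw [Function.iterate_succ_apply' L n, Function.iterate_succ_apply' L (n+1)]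
      simp only [hL] at ih ⊢
      refine ⟨?_, ?_⟩ <;>
        simp only [mul_add, add_mul, mul_smul_comm, smul_mul_assoc, mul_one, one_mul,
          ih.1, ih.2]
  -- power-step relations for s
  have powkey : ∀ n m : ℕ,
      s ^ n * (L^[m] (e, e')).1 = (L^[m+n] (e, e')).1 * s ^ n ∧
      s ^ n * (L^[m] (e, e')).2 = (L^[m+n] (e, e')).2 * s ^ n := by
    intro n
    induction n with
    | zero => intro m; simp
    | succ n ih =>
      intro m
      have e1 : m + (n + 1) = (m + n) + 1 := by omega
      constructor
      · rw [pow_succ', mul_assoc, (ih m).1, ← mul_assoc, (key (m+n)).1, e1,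
          mul_assoc, ← pow_succ']
      · rw [pow_succ', mul_assoc, (ih m).2, ← mul_assoc, (key (m+n)).2, e1,
          mul_assoc, ← pow_succ']
  have powkeyt : ∀ n m : ℕ,
      (L^[m] (e, e')).1 * t ^ n = t ^ n * (L^[m+n] (e, e')).1 ∧
      (L^[m] (e, e')).2 * t ^ n = t ^ n * (L^[m+n] (e, e')).2 := by
    intro n
    induction n with
    | zero => intro m; simp
    | succ n ih =>
      intro m
      have e1 : m + (n + 1) = (m + n) + 1 := by omega
      constructor
      · rw [pow_succ, ← mul_assoc, (ih m).1, mul_assoc, (keyt (m+n)).1, e1,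
          ← mul_assoc]
      · rw [pow_succ, ← mul_assoc, (ih m).2, mul_assoc, (keyt (m+n)).2, e1,
          ← mul_assoc]
  -- monomial versions
  have mono1 : ∀ n i : ℕ, s ^ n * e ^ i = (L^[n] (e, e')).1 ^ i * s ^ n := by
    intro n i
    induction i with
    | zero => simp
    | succ i ih =>
      have h := (powkey n 0).1
      simp only [Function.iterate_zero, id_eq, Nat.zero_add] at h
      rw [pow_succ, ← mul_assoc, ih, mul_assoc, h, ← mul_assoc, ← pow_succ]
  have mono2 : ∀ n j : ℕ, s ^ n * e' ^ j = (L^[n] (e, e')).2 ^ j * s ^ n := by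
    intro n j
    induction j with
    | zero => simp
    | succ j ih =>
      have h := (powkey n 0).2
      simp only [Function.iterate_zero, id_eq, Nat.zero_add] at h
      rw [pow_succ, ← mul_assoc, ih, mul_assoc, h, ← mul_assoc, ← pow_succ]
  have mono1t : ∀ n i : ℕ, e ^ i * t ^ n = t ^ n * (L^[n] (e, e')).1 ^ i := by
    intro n i
    induction i with
    | zero => simp
    | succ i ih =>
      have h := (powkeyt n 0).1
      simp only [Function.iterate_zero, id_eq, Nat.zero_add] at h
      rw [pow_succ', mul_assoc, ih, ← mul_assoc, h, mul_assoc, ← pow_succ']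
  have mono2t : ∀ n j : ℕ, e' ^ j * t ^ n = t ^ n * (L^[n] (e, e')).2 ^ j := by
    intro n j
    induction j with
    | zero => simp
    | succ j ih =>
      have h := (powkeyt n 0).2
      simp only [Function.iterate_zero, id_eq, Nat.zero_add] at h
      rw [pow_succ', mul_assoc, ih, ← mul_assoc, h, mul_assoc, ← pow_succ']
  intro n i j
  constructor
  · rw [mul_assoc, ← mul_assoc (s^n), mono1, mul_assoc, mono2, ← mul_assoc]
  · rw [mul_assoc, mono2t, ← mul_assoc, mono1t, mul_assoc]
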